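/- Let Q1, Q2 be quadratic forms on R^3 satisfying the nondegeneracy condition of Theorem 1.1. For any two-dimensional subspace V ⊂ R^5, the set {ξ ∈ R^3 : dim(π_ξ(V)) ≤ 1} is contained in the zero set of a nonzero polynomial of degree at most 2, where π_ξ is the orthogonal projection onto the tangent space to the surface {(r,s,t,Q1,Q2)} at ξ. -/

import Mathlib

open Matrix MvPolynomial

/-- The three tangent vectors `n₁(ξ), n₂(ξ), n₃(ξ)` of the surface
`(r,s,t,Q₁(r,s,t),Q₂(r,s,t))` at the point `ξ`, where `Q_i(v) = v ⬝ A_i v`. -/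
noncomputable def tangentVec (A₁ A₂ : Matrix (Fin 3) (Fin 3) ℝ) (ξ : Fin 3 → ℝ) :
    Fin 3 → EuclideanSpace ℝ (Fin 5) :=
  ![(WithLp.toLp 2 ![1, 0, 0, ((2 : ℝ) • A₁.mulVec ξ) 0, ((2 : ℝ) • A₂.mulVec ξ) 0] :
      EuclideanSpace ℝ (Fin 5)),
    WithLp.toLp 2 ![0, 1, 0, ((2 : ℝ) • A₁.mulVec ξ) 1, ((2 : ℝ) • A₂.mulVec ξ) 1],
    WithLp.toLp 2 ![0, 0, 1, ((2 : ℝ) • A₁.mulVec ξ) 2, ((2 : ℝ) • A₂.mulVec ξ) 2]]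

/-- The tangent space to the surface `(r,s,t,Q₁,Q₂)` at `ξ`, as a subspace of `ℝ⁵`. -/
noncomputable def tangentSpace (A₁ A₂ : Matrix (Fin 3) (Fin 3) ℝ) (ξ : Fin 3 → ℝ) :
    Submodule ℝ (EuclideanSpace ℝ (Fin 5)) :=
  Submodule.span ℝ (Set.range (tangentVec A₁ A₂ ξ))

/-- The nondegeneracy condition of Theorem 1.1: for every nonzero `(u,v,w)`, the determinant
of the matrix with rows `∇Q₁(ξ), ∇Q₂(ξ), (u,v,w)` is not the zero polynomial in `ξ`. -/
def NondegCond (A₁ A₂ : Matrix (Fin 3) (Fin 3) ℝ) : Prop :=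
  ∀ x : Fin 3 → ℝ, x ≠ 0 →
    ∃ ξ : Fin 3 → ℝ,
      (Matrix.of ![(2 : ℝ) • A₁.mulVec ξ, (2 : ℝ) • A₂.mulVec ξ, x]).det ≠ 0

/-- projected "gradient" vector of z at ξ -/
noncomputable def cvec (A₁ A₂ : Matrix (Fin 3) (Fin 3) ℝ) (z : Fin 5 → ℝ) (ξ : Fin 3 → ℝ) :
    Fin 3 → ℝ :=
  ![z 0 + 2 * z 3 * A₁.mulVec ξ 0 + 2 * z 4 * A₂.mulVec ξ 0,
    z 1 + 2 * z 3 * A₁.mulVec ξ 1 + 2 * z 4 * A₂.mulVec ξ 1,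
    z 2 + 2 * z 3 * A₁.mulVec ξ 2 + 2 * z 4 * A₂.mulVec ξ 2]

noncomputable def cpoly (A₁ A₂ : Matrix (Fin 3) (Fin 3) ℝ) (z : Fin 5 → ℝ) (j : Fin 3) :
    MvPolynomial (Fin 3) ℝ :=
  C (![z 0, z 1, z 2] j) + ∑ k : Fin 3, C (2 * z 3 * A₁ j k + 2 * z 4 * A₂ j k) * X k

lemma cpoly_eval (A₁ A₂ : Matrix (Fin 3) (Fin 3) ℝ) (z : Fin 5 → ℝ) (j : Fin 3)
    (ξ : Fin 3 → ℝ) : eval ξ (cpoly A₁ A₂ z j) = cvec A₁ A₂ z ξ j := by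
  fin_cases j <;>
    simp [cpoly, cvec, Matrix.mulVec, dotProduct, Fin.sum_univ_three] <;> ring

lemma cpoly_deg (A₁ A₂ : Matrix (Fin 3) (Fin 3) ℝ) (z : Fin 5 → ℝ) (j : Fin 3) :
    (cpoly A₁ A₂ z j).totalDegree ≤ 1 := by
  refine le_trans (totalDegree_add _ _) (sup_le (by simp) ?_)
  refine le_trans (totalDegree_finset_sum _ _) (Finset.sup_le fun k _ => ?_)
  refine le_trans (totalDegree_mul _ _) ?_
  rw [totalDegree_C, totalDegree_X]

noncomputable def detp (A₁ A₂ : Matrix (Fin 3) (Fin 3) ℝ) (v w : Fin 5 → ℝ) (x : Fin 3 → ℝ) :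
    MvPolynomial (Fin 3) ℝ :=
  cpoly A₁ A₂ v 0 * (cpoly A₁ A₂ w 1 * C (x 2) - cpoly A₁ A₂ w 2 * C (x 1))
  - cpoly A₁ A₂ v 1 * (cpoly A₁ A₂ w 0 * C (x 2) - cpoly A₁ A₂ w 2 * C (x 0))
  + cpoly A₁ A₂ v 2 * (cpoly A₁ A₂ w 0 * C (x 1) - cpoly A₁ A₂ w 1 * C (x 0))

lemma detp_eval (A₁ A₂ : Matrix (Fin 3) (Fin 3) ℝ) (v w : Fin 5 → ℝ) (x ξ : Fin 3 → ℝ) :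
    eval ξ (detp A₁ A₂ v w x)
      = Matrix.det (Matrix.of ![cvec A₁ A₂ v ξ, cvec A₁ A₂ w ξ, x]) := by
  simp [_root_.detp, Matrix.det_fin_three, cpoly_eval]
  ring

lemma detp_deg (A₁ A₂ : Matrix (Fin 3) (Fin 3) ℝ) (v w : Fin 5 → ℝ) (x : Fin 3 → ℝ) :
    (detp A₁ A₂ v w x).totalDegree ≤ 2 := by
  have hsub : ∀ j j' i i' : Fin 3,
      (cpoly A₁ A₂ w j * C (x i) - cpoly A₁ A₂ w j' * C (x i')).totalDegree ≤ 1 := by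
    intro j j' i i'
    rw [sub_eq_add_neg]
    refine le_trans (totalDegree_add _ _) (sup_le ?_ ?_)
    · exact le_trans (totalDegree_mul _ _) (by simpa using cpoly_deg A₁ A₂ w j)
    · rw [totalDegree_neg]
      exact le_trans (totalDegree_mul _ _) (by simpa using cpoly_deg A₁ A₂ w j')
  have hterm : ∀ j j' j'' i i' : Fin 3,
      (cpoly A₁ A₂ v j * (cpoly A₁ A₂ w j' * C (x i) - cpoly A₁ A₂ w j'' * C (x i'))).totalDegree ≤ 2 := by
    intro j j' j'' i i'
    refine le_trans (totalDegree_mul _ _) ?_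
    have := cpoly_deg A₁ A₂ v j
    have := hsub j' j'' i i'
    omega
  unfold _root_.detp
  rw [sub_eq_add_neg]
  refine le_trans (totalDegree_add _ _) (sup_le (le_trans (totalDegree_add _ _) (sup_le ?_ ?_)) ?_)
  · exact hterm _ _ _ _ _
  · rw [totalDegree_neg]; exact hterm _ _ _ _ _
  · exact hterm _ _ _ _ _

lemma aux (A₁ A₂ : Matrix (Fin 3) (Fin 3) ℝ) (hnd : NondegCond A₁ A₂)
    (v' : Fin 5 → ℝ) (e : Fin 3 → ℝ) (he : e ≠ 0)
    (h : ∀ ξ x : Fin 3 → ℝ, Matrix.det (Matrix.of ![cvec A₁ A₂ v' ξ, e, x]) = 0) :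
    v' 3 = 0 ∧ v' 4 = 0 := by
  obtain ⟨ξ₀, hdet⟩ := hnd e he
  have h1P := h ξ₀ (A₁.mulVec ξ₀)
  have h0P := h 0 (A₁.mulVec ξ₀)
  have h1Q := h ξ₀ (A₂.mulVec ξ₀)
  have h0Q := h 0 (A₂.mulVec ξ₀)
  have k4 : v' 4 * Matrix.det (Matrix.of ![(2:ℝ) • A₁.mulVec ξ₀, (2:ℝ) • A₂.mulVec ξ₀, e]) = 0 := by
    simp only [cvec, Matrix.det_fin_three, Matrix.of_apply, Matrix.cons_val', Matrix.cons_val_zero,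
      Matrix.cons_val_one, Matrix.head_cons, Matrix.head_fin_const, Matrix.empty_val',
      Matrix.cons_val_fin_one, Matrix.cons_val_two, Matrix.tail_cons, Matrix.mulVec_zero,
      Pi.zero_apply, Pi.smul_apply, smul_eq_mul, mul_zero, zero_mul, add_zero] at h1P h0P ⊢
    linear_combination 2*h1P - 2*h0P
  have k3 : v' 3 * Matrix.det (Matrix.of ![(2:ℝ) • A₁.mulVec ξ₀, (2:ℝ) • A₂.mulVec ξ₀, e]) = 0 := by
    simp only [cvec, Matrix.det_fin_three, Matrix.of_apply, Matrix.cons_val', Matrix.cons_val_zero,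
      Matrix.cons_val_one, Matrix.head_cons, Matrix.head_fin_const, Matrix.empty_val',
      Matrix.cons_val_fin_one, Matrix.cons_val_two, Matrix.tail_cons, Matrix.mulVec_zero,
      Pi.zero_apply, Pi.smul_apply, smul_eq_mul, mul_zero, zero_mul, add_zero] at h1Q h0Q ⊢
    linear_combination 2*h0Q - 2*h1Q
  exact ⟨(mul_eq_zero.mp k3).resolve_right hdet, (mul_eq_zero.mp k4).resolve_right hdet⟩

lemma exists_ne_det (A₁ A₂ : Matrix (Fin 3) (Fin 3) ℝ) (hnd : NondegCond A₁ A₂)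
    (v w : Fin 5 → ℝ)
    (hind : ∀ α β : ℝ, α * v 0 + β * w 0 = 0 → α * v 1 + β * w 1 = 0 →
      α * v 2 + β * w 2 = 0 → α * v 3 + β * w 3 = 0 → α * v 4 + β * w 4 = 0 →
      α = 0 ∧ β = 0) :
    ∃ ξ x : Fin 3 → ℝ,
      Matrix.det (Matrix.of ![cvec A₁ A₂ v ξ, cvec A₁ A₂ w ξ, x]) ≠ 0 := by
  by_contra hcon
  push_neg at hcon
  by_cases hD : v 3 * w 4 - v 4 * w 3 = 0
  · by_cases hv3 : v 3 = 0
    · by_cases hv4 : v 4 = 0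
      · -- v 3 = v 4 = 0
        have hz : ∀ ξ : Fin 3 → ℝ, cvec A₁ A₂ v ξ = ![v 0, v 1, v 2] := by
          intro ξ; funext j; fin_cases j <;> simp [cvec, hv3, hv4]
        have he : (![v 0, v 1, v 2] : Fin 3 → ℝ) ≠ 0 := by
          intro h0
          have h00 := congrFun h0 0
          have h01 := congrFun h0 1
          have h02 := congrFun h0 2
          simp at h00 h01 h02
          have := (hind 1 0 (by linear_combination h00) (by linear_combination h01)
            (by linear_combination h02) (by linear_combination hv3)
            (by linear_combination hv4)).1
          norm_num at this
        have h'' : ∀ ξ x : Fin 3 → ℝ,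
            Matrix.det (Matrix.of ![cvec A₁ A₂ w ξ, ![v 0, v 1, v 2], x]) = 0 := by
          intro ξ x
          rw [← hz ξ]
          have hh := hcon ξ x
          simp only [cvec, Matrix.det_fin_three, Matrix.of_apply, Matrix.cons_val',
            Matrix.cons_val_zero, Matrix.cons_val_one, Matrix.head_cons, Matrix.head_fin_const,
            Matrix.empty_val', Matrix.cons_val_fin_one, Matrix.cons_val_two,
            Matrix.tail_cons] at hh ⊢
          linear_combination -hh
        have hw34 := aux A₁ A₂ hnd w _ he h''
        -- now all four of v3 v4 w3 w4 are zero : B0 case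
        have r0 := hcon 0 ![1,0,0]
        have r1 := hcon 0 ![0,1,0]
        have r2 := hcon 0 ![0,0,1]
        simp only [cvec, Matrix.det_fin_three, Matrix.of_apply, Matrix.cons_val',
          Matrix.cons_val_zero, Matrix.cons_val_one, Matrix.head_cons, Matrix.head_fin_const,
          Matrix.empty_val', Matrix.cons_val_fin_one, Matrix.cons_val_two, Matrix.tail_cons,
          Matrix.mulVec_zero, Pi.zero_apply, mul_zero, zero_mul, add_zero, mul_one, mul_zero,
          sub_zero, zero_sub, one_mul] at r0 r1 r2
        by_cases h0 : v 0 = 0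
        · by_cases h1 : v 1 = 0
          · by_cases h2 : v 2 = 0
            · have := (hind 1 0 (by linear_combination h0) (by linear_combination h1)
                (by linear_combination h2) (by linear_combination hv3)
                (by linear_combination hv4)).1
              norm_num at this
            · have := (hind (w 2) (-(v 2)) (by linear_combination -r1)
                (by linear_combination r0) (by ring)
                (by linear_combination (w 2) * hv3 - (v 2) * hw34.1)
                (by linear_combination (w 2) * hv4 - (v 2) * hw34.2)).2
              exact h2 (by linarith)
          · have := (hind (w 1) (-(v 1)) (by linear_combination r2) (by ring)
              (by linear_combination -r0)
              (by linear_combination (w 1) * hv3 - (v 1) * hw34.1)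
              (by linear_combination (w 1) * hv4 - (v 1) * hw34.2)).2
            exact h1 (by linarith)
        · have := (hind (w 0) (-(v 0)) (by ring) (by linear_combination -r2)
            (by linear_combination r1)
            (by linear_combination (w 0) * hv3 - (v 0) * hw34.1)
            (by linear_combination (w 0) * hv4 - (v 0) * hw34.2)).2
          exact h0 (by linarith)
      · -- v 4 ≠ 0
        have hz : ∀ ξ : Fin 3 → ℝ, cvec A₁ A₂ (fun i => v 4 * w i - w 4 * v i) ξ
            = ![v 4 * w 0 - w 4 * v 0, v 4 * w 1 - w 4 * v 1, v 4 * w 2 - w 4 * v 2] := by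
          intro ξ; funext j; fin_cases j
          · simp [cvec]; linear_combination (-2 * A₁.mulVec ξ 0) * hD
          · simp [cvec]; linear_combination (-2 * A₁.mulVec ξ 1) * hD
          · simp [cvec]; linear_combination (-2 * A₁.mulVec ξ 2) * hD
        have he : (![v 4 * w 0 - w 4 * v 0, v 4 * w 1 - w 4 * v 1, v 4 * w 2 - w 4 * v 2]
            : Fin 3 → ℝ) ≠ 0 := by
          intro h0
          have h00 := congrFun h0 0
          have h01 := congrFun h0 1
          have h02 := congrFun h0 2
          simp at h00 h01 h02
          exact hv4 ((hind (-(w 4)) (v 4) (by linear_combination h00)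
            (by linear_combination h01) (by linear_combination h02)
            (by linear_combination -hD) (by ring)).2)
        have h' : ∀ ξ x : Fin 3 → ℝ,
            Matrix.det (Matrix.of ![cvec A₁ A₂ v ξ,
              ![v 4 * w 0 - w 4 * v 0, v 4 * w 1 - w 4 * v 1, v 4 * w 2 - w 4 * v 2], x]) = 0 := by
          intro ξ x
          rw [← hz ξ]
          have hh := hcon ξ x
          simp only [cvec, Matrix.det_fin_three, Matrix.of_apply, Matrix.cons_val',
            Matrix.cons_val_zero, Matrix.cons_val_one, Matrix.head_cons, Matrix.head_fin_const,
            Matrix.empty_val', Matrix.cons_val_fin_one, Matrix.cons_val_two,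
            Matrix.tail_cons] at hh ⊢
          linear_combination (v 4) * hh
        exact hv4 (aux A₁ A₂ hnd v _ he h').2
    · -- v 3 ≠ 0
      have hz : ∀ ξ : Fin 3 → ℝ, cvec A₁ A₂ (fun i => v 3 * w i - w 3 * v i) ξ
          = ![v 3 * w 0 - w 3 * v 0, v 3 * w 1 - w 3 * v 1, v 3 * w 2 - w 3 * v 2] := by
        intro ξ; funext j; fin_cases j
        · simp [cvec]; linear_combination (2 * A₂.mulVec ξ 0) * hD
        · simp [cvec]; linear_combination (2 * A₂.mulVec ξ 1) * hD
        · simp [cvec]; linear_combination (2 * A₂.mulVec ξ 2) * hD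
      have he : (![v 3 * w 0 - w 3 * v 0, v 3 * w 1 - w 3 * v 1, v 3 * w 2 - w 3 * v 2]
          : Fin 3 → ℝ) ≠ 0 := by
        intro h0
        have h00 := congrFun h0 0
        have h01 := congrFun h0 1
        have h02 := congrFun h0 2
        simp at h00 h01 h02
        exact hv3 ((hind (-(w 3)) (v 3) (by linear_combination h00)
          (by linear_combination h01) (by linear_combination h02)
          (by ring) (by linear_combination hD)).2)
      have h' : ∀ ξ x : Fin 3 → ℝ,
          Matrix.det (Matrix.of ![cvec A₁ A₂ v ξ,
            ![v 3 * w 0 - w 3 * v 0, v 3 * w 1 - w 3 * v 1, v 3 * w 2 - w 3 * v 2], x]) = 0 := by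
        intro ξ x
        rw [← hz ξ]
        have hh := hcon ξ x
        simp only [cvec, Matrix.det_fin_three, Matrix.of_apply, Matrix.cons_val',
          Matrix.cons_val_zero, Matrix.cons_val_one, Matrix.head_cons, Matrix.head_fin_const,
          Matrix.empty_val', Matrix.cons_val_fin_one, Matrix.cons_val_two,
          Matrix.tail_cons] at hh ⊢
        linear_combination (v 3) * hh
      exact hv3 (aux A₁ A₂ hnd v _ he h').1
  · -- D ≠ 0
    have hx : (![1,0,0] : Fin 3 → ℝ) ≠ 0 := by
      intro h; have := congrFun h 0; norm_num at this
    obtain ⟨ξ₀, hdet⟩ := hnd ![1,0,0] hx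
    have key : (v 3 * w 4 - v 4 * w 3) *
        (Matrix.of ![(2:ℝ) • A₁.mulVec ξ₀, (2:ℝ) • A₂.mulVec ξ₀, ![1,0,0]]).det = 0 := by
      have h1 := hcon ξ₀ ![1,0,0]
      have h0 := hcon 0 ![1,0,0]
      have h2 := hcon (-ξ₀) ![1,0,0]
      simp only [cvec, Matrix.det_fin_three, Matrix.of_apply, Matrix.cons_val',
        Matrix.cons_val_zero, Matrix.cons_val_one, Matrix.head_cons, Matrix.head_fin_const,
        Matrix.empty_val', Matrix.cons_val_fin_one, Matrix.cons_val_two, Matrix.tail_cons,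
        Matrix.mulVec_zero, Matrix.mulVec_neg, Pi.neg_apply, Pi.zero_apply, Pi.smul_apply,
        smul_eq_mul, mul_zero, zero_mul, add_zero, mul_one, sub_zero, zero_sub,
        one_mul] at h1 h0 h2 ⊢
      linear_combination (h1 + h2 - 2*h0)/2
    exact hdet ((mul_eq_zero.mp key).resolve_left hD)

/-- For a two-dimensional subspace `V ⊂ ℝ⁵`, the set of points `ξ` where the orthogonal
projection of `V` onto the tangent space of the surface at `ξ` has dimension at most 1 is
contained in the zero set of a nonzero polynomial of degree at most 2. -/
theorem stmt13 (A₁ A₂ : Matrix (Fin 3) (Fin 3) ℝ) (hA₁ : A₁.IsSymm) (hA₂ : A₂.IsSymm)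
    (hnd : NondegCond A₁ A₂)
    (V : Submodule ℝ (EuclideanSpace ℝ (Fin 5))) (hV : Module.finrank ℝ V = 2) :
    ∃ p : MvPolynomial (Fin 3) ℝ, p ≠ 0 ∧ p.totalDegree ≤ 2 ∧
      ∀ ξ : Fin 3 → ℝ,
        Module.finrank ℝ
            (V.map (Submodule.orthogonalProjectionOnto (tangentSpace A₁ A₂ ξ)).toLinearMap) ≤ 1 →
          MvPolynomial.eval ξ p = 0 := by
  classical
  have b : Module.Basis (Fin 2) ℝ V := Module.finBasisOfFinrankEq ℝ V hV
  set v : EuclideanSpace ℝ (Fin 5) := (b 0 : EuclideanSpace ℝ (Fin 5)) with hv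
  set w : EuclideanSpace ℝ (Fin 5) := (b 1 : EuclideanSpace ℝ (Fin 5)) with hw
  have hli : LinearIndependent ℝ (fun i : Fin 2 => ((b i : V) : EuclideanSpace ℝ (Fin 5))) :=
    b.linearIndependent.map' V.subtype (Submodule.ker_subtype V)
  rw [Fintype.linearIndependent_iff] at hli
  have hind : ∀ α β : ℝ, α * v 0 + β * w 0 = 0 → α * v 1 + β * w 1 = 0 →
      α * v 2 + β * w 2 = 0 → α * v 3 + β * w 3 = 0 → α * v 4 + β * w 4 = 0 →
      α = 0 ∧ β = 0 := by
    intro α β e0 e1 e2 e3 e4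
    have hsum : ∑ i : Fin 2, ![α, β] i • ((b i : V) : EuclideanSpace ℝ (Fin 5)) = 0 := by
      rw [Fin.sum_univ_two]
      ext i
      fin_cases i <;>
        simpa [← hv, ← hw] using (by assumption : _)
    have := hli ![α, β] hsum
    exact ⟨this 0, this 1⟩
  obtain ⟨ξ₀, x₀, hne⟩ := exists_ne_det A₁ A₂ hnd v w hind
  refine ⟨detp A₁ A₂ v w x₀, ?_, detp_deg A₁ A₂ v w x₀, ?_⟩
  · intro hp
    apply hne
    rw [← detp_eval A₁ A₂ v w x₀ ξ₀, hp, map_zero]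
  · intro ξ hrank
    set K := tangentSpace A₁ A₂ ξ with hK
    set f : V →ₗ[ℝ] K := (Submodule.orthogonalProjectionOnto K).toLinearMap.comp V.subtype with hf
    have hrange : LinearMap.range f = V.map (Submodule.orthogonalProjectionOnto K).toLinearMap := by
      rw [hf, LinearMap.range_comp, Submodule.range_subtype]
    have hker : 0 < Module.finrank ℝ (LinearMap.ker f) := by
      have hrn := LinearMap.finrank_range_add_finrank_ker f
      rw [hrange, hV] at hrn
      omega
    have : Nontrivial (LinearMap.ker f) := by
      rw [← Module.finrank_pos_iff (R := ℝ)]; exact hker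
    obtain ⟨y, hy⟩ := exists_ne (0 : LinearMap.ker f)
    set z : EuclideanSpace ℝ (Fin 5) := ((y : V) : EuclideanSpace ℝ (Fin 5)) with hzdef
    have hz0 : z ≠ 0 := by
      intro h
      exact hy (Subtype.ext (Subtype.ext h))
    have hproj : Submodule.orthogonalProjectionOnto K z = 0 := y.2
    have hperp : z ∈ Kᗮ := Submodule.orthogonalProjectionOnto_eq_zero_iff.mp hproj
    have hinner : ∀ i : Fin 3, (inner ℝ (tangentVec A₁ A₂ ξ i) z : ℝ) = 0 := fun i =>
      (Submodule.mem_orthogonal K z).mp hperp _ (Submodule.subset_span ⟨i, rfl⟩)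
    have i0 := hinner 0
    have i1 := hinner 1
    have i2 := hinner 2
    simp only [tangentVec, PiLp.inner_apply, RCLike.inner_apply, conj_trivial,
      Fin.sum_univ_five, Matrix.cons_val_zero, Matrix.cons_val_one, Matrix.head_cons,
      Matrix.cons_val_two, Matrix.tail_cons, Matrix.cons_val_three, Matrix.cons_val_four,
      Matrix.head_fin_const, Pi.smul_apply, smul_eq_mul, one_mul, zero_mul, add_zero,
      zero_add] at i0 i1 i2
    have c0 : cvec A₁ A₂ z ξ 0 = 0 := by
      simp only [cvec, Matrix.cons_val_zero]; linear_combination i0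
    have c1 : cvec A₁ A₂ z ξ 1 = 0 := by
      simp only [cvec, Matrix.cons_val_one, Matrix.head_cons, Matrix.cons_val_zero]; linear_combination i1
    have c2 : cvec A₁ A₂ z ξ 2 = 0 := by
      simp only [cvec, Matrix.cons_val_two, Matrix.tail_cons, Matrix.head_cons]
      linear_combination i2
    set α : ℝ := b.repr (y : V) 0 with hα
    set β : ℝ := b.repr (y : V) 1 with hβ
    have hzvw : ∀ i : Fin 5, z i = α * v i + β * w i := by
      have h := congrArg (Submodule.subtype V) (b.sum_repr (y : V))
      simp only [map_sum, LinearMap.map_smul, Fin.sum_univ_two, Submodule.subtype_apply] at h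
      intro i
      have := congrArg (fun u : EuclideanSpace ℝ (Fin 5) => u i) h.symm
      simpa [← hv, ← hw, ← hα, ← hβ] using this
    have hab : ¬(α = 0 ∧ β = 0) := by
      rintro ⟨ha, hb⟩
      apply hz0
      ext i
      rw [hzvw i, ha, hb]
      norm_num
    have l0 : α * cvec A₁ A₂ v ξ 0 + β * cvec A₁ A₂ w ξ 0 = 0 := by
      have h1 := c0
      simp only [cvec, Matrix.cons_val_zero, hzvw] at h1
      simp only [cvec, Matrix.cons_val_zero]
      linear_combination h1
    have l1 : α * cvec A₁ A₂ v ξ 1 + β * cvec A₁ A₂ w ξ 1 = 0 := by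
      have h1 := c1
      simp only [cvec, Matrix.cons_val_one, Matrix.head_cons, Matrix.cons_val_zero, hzvw] at h1
      simp only [cvec, Matrix.cons_val_one, Matrix.head_cons, Matrix.cons_val_zero]
      linear_combination h1
    have l2 : α * cvec A₁ A₂ v ξ 2 + β * cvec A₁ A₂ w ξ 2 = 0 := by
      have h1 := c2
      simp only [cvec, Matrix.cons_val_two, Matrix.tail_cons, Matrix.head_cons, hzvw] at h1
      simp only [cvec, Matrix.cons_val_two, Matrix.tail_cons, Matrix.head_cons]
      linear_combination h1
    rw [detp_eval]
    rcases not_and_or.mp hab with ha | hb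
    · have hrow0 : cvec A₁ A₂ v ξ 0 = -(β/α) * cvec A₁ A₂ w ξ 0 := by
        field_simp
        linear_combination l0
      have hrow1 : cvec A₁ A₂ v ξ 1 = -(β/α) * cvec A₁ A₂ w ξ 1 := by
        field_simp
        linear_combination l1
      have hrow2 : cvec A₁ A₂ v ξ 2 = -(β/α) * cvec A₁ A₂ w ξ 2 := by
        field_simp
        linear_combination l2
      simp only [Matrix.det_fin_three, Matrix.of_apply, Matrix.cons_val', Matrix.cons_val_zero,
        Matrix.cons_val_one, Matrix.head_cons, Matrix.head_fin_const, Matrix.empty_val',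
        Matrix.cons_val_fin_one, Matrix.cons_val_two, Matrix.tail_cons, hrow0, hrow1, hrow2]
      ring
    · have hrow0 : cvec A₁ A₂ w ξ 0 = -(α/β) * cvec A₁ A₂ v ξ 0 := by
        field_simp
        linear_combination l0
      have hrow1 : cvec A₁ A₂ w ξ 1 = -(α/β) * cvec A₁ A₂ v ξ 1 := by
        field_simp
        linear_combination l1
      have hrow2 : cvec A₁ A₂ w ξ 2 = -(α/β) * cvec A₁ A₂ v ξ 2 := by
        field_simp
        linear_combination l2
      simp only [Matrix.det_fin_three, Matrix.of_apply, Matrix.cons_val', Matrix.cons_val_zero,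
        Matrix.cons_val_one, Matrix.head_cons, Matrix.head_fin_const, Matrix.empty_val',
        Matrix.cons_val_fin_one, Matrix.cons_val_two, Matrix.tail_cons, hrow0, hrow1, hrow2]
      ring
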